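/- The sequence of truncated radicals s(N) defined by the downward recursion u(N) = 0, u(k) = Real.sqrt (1 + (k + 2) * u(k+1)) for k < N, and s(N) = u(0), converges to 3 as N → ∞. -/

import Mathlib

theorem ramanujan_radical_limit (u : ℕ → ℕ → ℝ)
    (htail : ∀ N, u N N = 0)
    (hrec : ∀ N k, k < N → u N k = Real.sqrt (1 + ((k : ℝ) + 2) * u N (k + 1))) :
    Filter.Tendsto (fun N => u N 0) Filter.atTop (nhds 3) := by
  -- main downward induction
  have key : ∀ N : ℕ, ∀ j k : ℕ, k + j = N →
      0 ≤ u N k ∧ u N k ≤ (k : ℝ) + 3 ∧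
      ((k : ℝ) + 3) - u N k ≤ ((k : ℝ) + 2) * ((k : ℝ) + 3) / ((N : ℝ) + 2) := by
    intro N j
    induction j with
    | zero =>
      intro k hk
      simp only [Nat.add_zero] at hk
      subst hk
      rw [htail]
      have hD : (0:ℝ) < (k : ℝ) + 2 := by positivity
      refine ⟨le_refl _, by positivity, ?_⟩
      rw [sub_zero, le_div_iff₀ hD]
      ring_nf
      nlinarith
    | succ j ih =>
      intro k hk
      have hk1 : (k + 1) + j = N := by omega
      obtain ⟨hv0, hv1, hv2⟩ := ih (k + 1) hk1
      push_cast at hv1 hv2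
      have hkN : k < N := by omega
      set v := u N (k + 1) with hv
      have harg : (0:ℝ) ≤ 1 + ((k:ℝ) + 2) * v := by positivity
      have hu : u N k = Real.sqrt (1 + ((k:ℝ) + 2) * v) := hrec N k hkN
      have hu0 : 0 ≤ u N k := by rw [hu]; exact Real.sqrt_nonneg _
      have husq : (u N k) ^ 2 = 1 + ((k:ℝ) + 2) * v := by
        rw [hu]; exact Real.sq_sqrt harg
      have hu1 : 1 ≤ u N k := by
        rw [hu]
        have : Real.sqrt 1 ≤ Real.sqrt (1 + ((k:ℝ) + 2) * v) :=
          Real.sqrt_le_sqrt (by nlinarith)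
        simpa using this
      have hub : u N k ≤ (k:ℝ) + 3 := by
        nlinarith [husq, hu0]
      refine ⟨hu0, hub, ?_⟩
      have hD : (0:ℝ) < (N : ℝ) + 2 := by positivity
      rw [le_div_iff₀ hD] at hv2 ⊢
      nlinarith [mul_nonneg (sub_nonneg.2 hub) (sub_nonneg.2 hu1),
        mul_le_mul_of_nonneg_left hv2 (show (0:ℝ) ≤ (k:ℝ)+2 by positivity),
        mul_nonneg (sub_nonneg.2 hub) hD.le]
  -- squeeze
  have hlow : ∀ N : ℕ, 3 - 6 / ((N:ℝ) + 2) ≤ u N 0 := by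
    intro N
    obtain ⟨_, _, h2⟩ := key N N 0 (by omega)
    push_cast at h2
    have hD : (0:ℝ) < (N : ℝ) + 2 := by positivity
    rw [le_div_iff₀ hD] at h2
    rw [sub_le_iff_le_add, ← sub_le_iff_le_add', le_div_iff₀ hD]
    nlinarith
  have hup : ∀ N : ℕ, u N 0 ≤ 3 := by
    intro N
    obtain ⟨_, h1, _⟩ := key N N 0 (by omega)
    simpa using h1
  have hzero : Filter.Tendsto (fun N : ℕ => 3 - 6 / ((N:ℝ) + 2)) Filter.atTop (nhds 3) := by
    have h1 : Filter.Tendsto (fun N : ℕ => (N:ℝ) + 2) Filter.atTop Filter.atTop :=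
      Filter.tendsto_atTop_add_const_right _ 2 tendsto_natCast_atTop_atTop
    have h2 : Filter.Tendsto (fun N : ℕ => 6 / ((N:ℝ) + 2)) Filter.atTop (nhds 0) := by
      simpa [div_eq_mul_inv] using h1.inv_tendsto_atTop.const_mul (6:ℝ)
    simpa using (tendsto_const_nhds (x := (3:ℝ))).sub h2
  exact tendsto_of_tendsto_of_tendsto_of_le_of_le hzero tendsto_const_nhds
    (fun N => hlow N) (fun N => hup N)
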